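/- Let $\hat\beta_1, \hat\beta_2, \hat\beta_3$ be real numbers. Then $\hat\beta_1 |nn^T : D|^2 + \hat\beta_2 |D|^2 + \hat\beta_3 |D n|^2 \geq 0$ holds for every symmetric traceless $3\times 3$ matrix $D$ and every unit vector $n \in \mathbb{R}^3$ if and only if $\hat\beta_2 \geq 0$, $2\hat\beta_2 + \hat\beta_3 \geq 0$, and $\tfrac{3}{2}\hat\beta_2 + \hat\beta_3 + \hat\beta_1 \geq 0$. -/

import Mathlib

open Matrix BigOperators

noncomputable section

abbrev M3 := Matrix (Fin 3) (Fin 3) ℝ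

def frob (A B : M3) : ℝ := ∑ i, ∑ j, A i j * B i j

set_option maxHeartbeats 2000000

lemma aux2 (b1 b2 b3 a w0 w1 w2 n0 n1 n2 d00 d01 d02 d11 d12 d22 : ℝ)
    (hn : n0*n0 + n1*n1 + n2*n2 = 1) (ht : d00 + d11 + d22 = 0)
    (hw0 : n2*d02 + n1*d01 + n0*d00 = w0 + a*n0)
    (hw1 : n2*d12 + n1*d11 + n0*d01 = w1 + a*n1)
    (hw2 : n2*d22 + n1*d12 + n0*d02 = w2 + a*n2)
    (hA : a = n2^2*d22 + 2*n1*n2*d12 + n1^2*d11 + 2*n0*n2*d02 + 2*n0*n1*d01 + n0^2*d00)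
    (h2 : 0 ≤ b2) (h23 : 0 ≤ 2*b2 + b3) (h1 : 0 ≤ 3/2*b2 + b3 + b1) :
    0 ≤ b1 * a^2 + b2 * (d22^2 + 2*d12^2 + d11^2 + 2*d02^2 + 2*d01^2 + d00^2) + b3 * (n2^2*d22^2 + n2^2*d12^2 + n2^2*d02^2 + 2*n1*n2*d12*d22 + 2*n1*n2*d11*d12 + 2*n1*n2*d01*d02 + n1^2*d12^2 + n1^2*d11^2 + n1^2*d01^2 + 2*n0*n2*d02*d22 + 2*n0*n2*d01*d12 + 2*n0*n2*d00*d02 + 2*n0*n1*d02*d12 + 2*n0*n1*d01*d11 + 2*n0*n1*d00*d01 + n0^2*d02^2 + n0^2*d01^2 + n0^2*d00^2) := by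
  have hwn : w0*n0 + w1*n1 + w2*n2 = 0 := by
    linear_combination (-n0)*hw0 - n1*hw1 - n2*hw2 - hA - a*hn
  have eqG : (n2^2*d22^2 + n2^2*d12^2 + n2^2*d02^2 + 2*n1*n2*d12*d22 + 2*n1*n2*d11*d12 + 2*n1*n2*d01*d02 + n1^2*d12^2 + n1^2*d11^2 + n1^2*d01^2 + 2*n0*n2*d02*d22 + 2*n0*n2*d01*d12 + 2*n0*n2*d00*d02 + 2*n0*n1*d02*d12 + 2*n0*n1*d01*d11 + 2*n0*n1*d00*d01 + n0^2*d02^2 + n0^2*d01^2 + n0^2*d00^2) = (w0^2 + w1^2 + w2^2) + a^2 := by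
    linear_combination (n2*d02 + n1*d01 + n0*d00 + w0 - a*n0) * hw0 + (n2*d12 + n1*d11 + n0*d01 + w1 - a*n1) * hw1 + (n2*d22 + n1*d12 + n0*d02 + w2 - a*n2) * hw2 + (- 2*n0^2*d22 - 2*n0^2*d11 + 2*n0^2*n2^2*d11 - 4*n0^2*n1*n2*d12 + 2*n0^2*n1^2*d22 - 4*n0^3*n2*d02 - 4*n0^3*n1*d01 + 2*n0^4*d22 + 2*n0^4*d11 - 2*n0^4*d00 + 2*a*n0^2) * ht + (2*n2^2*d22^2 + 2*n2^2*d11*d22 + 4*n1*n2*d12*d22 + 4*n1*n2*d11*d12 + 2*n1^2*d11*d22 + 2*n1^2*d11^2 + 4*n0*n2*d02*d22 + 4*n0*n2*d02*d11 + 4*n0*n1*d01*d22 + 4*n0*n1*d01*d11 - 2*n0^2*d22^2 - 4*n0^2*d11*d22 - 2*n0^2*d11^2 - 2*a*d22 - 2*a*d11 - a^2) * hn + (- 2*d22 - 2*d11 + 2*n2^2*d22 + 2*n2^2*d11 + 2*n1^2*d22 + 2*n1^2*d11 - 2*n0^2*d00 - 2*a) * hA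
  have eqF : (d22^2 + 2*d12^2 + d11^2 + 2*d02^2 + 2*d01^2 + d00^2) = ((d00 - 3/2*a*(n0*n0 - 1/3) - (n0*w0 + w0*n0))^2 + 2*(d01 - 3/2*a*(n0*n1) - (n0*w1 + w0*n1))^2 + 2*(d02 - 3/2*a*(n0*n2) - (n0*w2 + w0*n2))^2 + (d11 - 3/2*a*(n1*n1 - 1/3) - (n1*w1 + w1*n1))^2 + 2*(d12 - 3/2*a*(n1*n2) - (n1*w2 + w1*n2))^2 + (d22 - 3/2*a*(n2*n2 - 1/3) - (n2*w2 + w2*n2))^2) + 2*(w0^2 + w1^2 + w2^2) + 3/2*a^2 := by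
    linear_combination (- 2*n2*d02 + 2*n2^3*d02 - 2*n1*d01 + 2*n1*n2^2*d01 + 2*n1^2*n2*d02 + 2*n1^3*d01 - 2*n0*d00 + 2*n0*n2^2*d00 + 2*n0*n1^2*d00 + 4*n0^2*n2*d02 + 4*n0^2*n1*d01 + 4*n0^3*d00 + 4*w2*n0*n2 + 4*w1*n0*n1 + 2*w0 + 2*w0*n2^2 + 2*w0*n1^2 + 4*w0*n0^2 - 4*a*n0 + 4*a*n0*n2^2 + 4*a*n0*n1^2 + 2*a*n0^3) * hw0 + (- 2*n2*d12 + 2*n2^3*d12 - 2*n1*d11 + 2*n1*n2^2*d11 + 4*n1^2*n2*d12 + 4*n1^3*d11 - 2*n0*d01 + 2*n0*n2^2*d01 + 4*n0*n1*n2*d02 + 8*n0*n1^2*d01 + 2*n0^2*n2*d12 + 2*n0^2*n1*d11 + 4*n0^2*n1*d00 + 2*n0^3*d01 + 4*w2*n1*n2 + 2*w1 + 2*w1*n2^2 + 4*w1*n1^2 + 2*w1*n0^2 - 4*a*n1 + 4*a*n1*n2^2 + 2*a*n1^3) * hw1 + (- 2*n2*d22 + 4*n2^3*d22 - 2*n1*d12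 + 8*n1*n2^2*d12 + 2*n1^2*n2*d22 + 4*n1^2*n2*d11 + 2*n1^3*d12 - 2*n0*d02 + 8*n0*n2^2*d02 + 8*n0*n1*n2*d01 + 2*n0*n1^2*d02 + 2*n0^2*n2*d22 + 4*n0^2*n2*d00 + 2*n0^2*n1*d12 + 2*n0^3*d02 + 2*w2 + 4*w2*n2^2 + 2*w2*n1^2 + 2*w2*n0^2 - 4*a*n2 + 2*a*n2^3) * hw2 + (4*n0*n2*d02 - 4*n0*n2^3*d02 + 4*n0*n1*d01 - 4*n0*n1*n2^2*d01 - 4*n0*n1^2*n2*d02 - 4*n0*n1^3*d01 - 9*n0^2*d22 - 9*n0^2*d11 + 2*n0^2*d00 + 2*n0^2*n2^2*d22 + 9*n0^2*n2^2*d11 - 2*n0^2*n2^2*d00 - 14*n0^2*n1*n2*d12 + 9*n0^2*n1^2*d22 + 2*n0^2*n1^2*d11 - 2*n0^2*n1^2*d00 - 18*n0^3*n2*d02 - 18*n0^3*n1*d01 + 9*n0^4*d22 + 9*n0^4*d11 - 9*n0^4*d00 - a + 5*a*n0^2 + 2*a*n0^2*n2^2 + 2*a*n0^2*n1^2 + 2*a*n0^4)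 * ht + (5*n2^2*d22^2 - 2*n2^2*d12^2 + 7*n2^2*d11*d22 - 2*n2^2*d02^2 + 10*n1*n2*d12*d22 + 10*n1*n2*d11*d12 - 4*n1*n2*d01*d02 - 2*n1^2*d12^2 + 7*n1^2*d11*d22 + 5*n1^2*d11^2 - 2*n1^2*d01^2 + 14*n0*n2*d02*d22 + 18*n0*n2*d02*d11 - 4*n0*n2*d01*d12 - 4*n0*n1*d02*d12 + 18*n0*n1*d01*d22 + 14*n0*n1*d01*d11 - 9*n0^2*d22^2 - 18*n0^2*d11*d22 - 9*n0^2*d11^2 - 2*n0^2*d02^2 - 2*n0^2*d01^2 - 7*a*d22 - 7*a*d11 + 2*a*n2^2*d22 + 4*a*n1*n2*d12 + 2*a*n1^2*d11 + 4*a*n0*n2*d02 + 4*a*n0*n1*d01 - 2*a*n0^2*d22 - 2*a*n0^2*d11 - (11/4)*a^2 - (1/4)*a^2*n2^2 - (1/4)*a^2*n1^2 - (1/4)*a^2*n0^2) * hn + (- 7*d22 - 7*d11 + 9*n2^2*d22 + 7*n2^2*d11 + 4*n1*n2*d12 + 7*n1^2*d22 + 9*n1^2*d11 + 4*n0*n2*d02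 + 4*n0*n1*d01 - 5*n0^2*d00 - 5*a) * hA
  have key : b1 * a^2 + b2 * (d22^2 + 2*d12^2 + d11^2 + 2*d02^2 + 2*d01^2 + d00^2) + b3 * (n2^2*d22^2 + n2^2*d12^2 + n2^2*d02^2 + 2*n1*n2*d12*d22 + 2*n1*n2*d11*d12 + 2*n1*n2*d01*d02 + n1^2*d12^2 + n1^2*d11^2 + n1^2*d01^2 + 2*n0*n2*d02*d22 + 2*n0*n2*d01*d12 + 2*n0*n2*d00*d02 + 2*n0*n1*d02*d12 + 2*n0*n1*d01*d11 + 2*n0*n1*d00*d01 + n0^2*d02^2 + n0^2*d01^2 + n0^2*d00^2)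
      = b2 * ((d00 - 3/2*a*(n0*n0 - 1/3) - (n0*w0 + w0*n0))^2 + 2*(d01 - 3/2*a*(n0*n1) - (n0*w1 + w0*n1))^2 + 2*(d02 - 3/2*a*(n0*n2) - (n0*w2 + w0*n2))^2 + (d11 - 3/2*a*(n1*n1 - 1/3) - (n1*w1 + w1*n1))^2 + 2*(d12 - 3/2*a*(n1*n2) - (n1*w2 + w1*n2))^2 + (d22 - 3/2*a*(n2*n2 - 1/3) - (n2*w2 + w2*n2))^2) + (2*b2 + b3) * (w0^2 + w1^2 + w2^2) + (3/2*b2 + b3 + b1) * a^2 := by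
    linear_combination b2 * eqF + b3 * eqG
  rw [key]
  have t1 : (0:ℝ) ≤ b2 * ((d00 - 3/2*a*(n0*n0 - 1/3) - (n0*w0 + w0*n0))^2 + 2*(d01 - 3/2*a*(n0*n1) - (n0*w1 + w0*n1))^2 + 2*(d02 - 3/2*a*(n0*n2) - (n0*w2 + w0*n2))^2 + (d11 - 3/2*a*(n1*n1 - 1/3) - (n1*w1 + w1*n1))^2 + 2*(d12 - 3/2*a*(n1*n2) - (n1*w2 + w1*n2))^2 + (d22 - 3/2*a*(n2*n2 - 1/3) - (n2*w2 + w2*n2))^2) := mul_nonneg h2 (by positivity)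
  have t2 : (0:ℝ) ≤ (2*b2 + b3) * (w0^2 + w1^2 + w2^2) := mul_nonneg h23 (by positivity)
  have t3 : (0:ℝ) ≤ (3/2*b2 + b3 + b1) * a^2 := mul_nonneg h1 (sq_nonneg a)
  linarith

lemma aux (b1 b2 b3 n0 n1 n2 d00 d01 d02 d11 d12 d22 : ℝ)
    (hn : n0*n0 + n1*n1 + n2*n2 = 1) (ht : d00 + d11 + d22 = 0)
    (h2 : 0 ≤ b2) (h23 : 0 ≤ 2*b2 + b3) (h1 : 0 ≤ 3/2*b2 + b3 + b1) :
    0 ≤ b1 * (n2^2*d22 + 2*n1*n2*d12 + n1^2*d11 + 2*n0*n2*d02 + 2*n0*n1*d01 + n0^2*d00)^2 + b2 * (d22^2 + 2*d12^2 + d11^2 + 2*d02^2 + 2*d01^2 + d00^2) + b3 * (n2^2*d22^2 + n2^2*d12^2 + n2^2*d02^2 + 2*n1*n2*d12*d22 + 2*n1*n2*d11*d12 + 2*n1*n2*d01*d02 + n1^2*d12^2 + n1^2*d11^2 + n1^2*d01^2 + 2*n0*n2*d02*d22 + 2*n0*n2*d01*d12 + 2*n0*n2*d00*d02 + 2*n0*n1*d02*d12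 + 2*n0*n1*d01*d11 + 2*n0*n1*d00*d01 + n0^2*d02^2 + n0^2*d01^2 + n0^2*d00^2) :=
  aux2 b1 b2 b3 (n2^2*d22 + 2*n1*n2*d12 + n1^2*d11 + 2*n0*n2*d02 + 2*n0*n1*d01 + n0^2*d00) ((n2*d02 + n1*d01 + n0*d00) - (n2^2*d22 + 2*n1*n2*d12 + n1^2*d11 + 2*n0*n2*d02 + 2*n0*n1*d01 + n0^2*d00)*n0) ((n2*d12 + n1*d11 + n0*d01) - (n2^2*d22 + 2*n1*n2*d12 + n1^2*d11 + 2*n0*n2*d02 + 2*n0*n1*d01 + n0^2*d00)*n1) ((n2*d22 + n1*d12 + n0*d02) - (n2^2*d22 + 2*n1*n2*d12 + n1^2*d11 + 2*n0*n2*d02 + 2*n0*n1*d01 + n0^2*d00)*n2)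
    n0 n1 n2 d00 d01 d02 d11 d12 d22 hn ht (by ring) (by ring) (by ring) (by ring) h2 h23 h1

/-- The dissipation relation `β̂₁|nnᵀ:D|² + β̂₂|D|² + β̂₃|Dn|² ≥ 0` holds for all
symmetric traceless `D` and unit vectors `n` iff
`β̂₂ ≥ 0`, `2β̂₂ + β̂₃ ≥ 0`, `(3/2)β̂₂ + β̂₃ + β̂₁ ≥ 0`. -/
theorem stmt7 (β1 β2 β3 : ℝ) :
    (∀ D : M3, Dᵀ = D → D.trace = 0 → ∀ n : Fin 3 → ℝ, (∑ i, n i * n i) = 1 →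
      0 ≤ β1 * (frob (vecMulVec n n) D) ^ 2 + β2 * frob D D
        + β3 * (∑ i, (D.mulVec n i) ^ 2)) ↔
    (0 ≤ β2 ∧ 0 ≤ 2 * β2 + β3 ∧ 0 ≤ 3/2 * β2 + β3 + β1) := by
  constructor
  · intro h
    refine ⟨?_, ?_, ?_⟩
    · have := h !![0,0,0;0,1,0;0,0,-1] (by ext i j; fin_cases i <;> fin_cases j <;> rfl)
        (by norm_num [Matrix.trace, Matrix.diag, Fin.sum_univ_three, Matrix.vecHead, Matrix.vecTail, Matrix.cons_val_two]) ![1,0,0]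
        (by norm_num [Fin.sum_univ_three, Matrix.vecHead, Matrix.vecTail, Matrix.cons_val_two])
      norm_num [frob, vecMulVec_apply, Matrix.mulVec, dotProduct, Fin.sum_univ_three, Matrix.vecHead, Matrix.vecTail, Matrix.cons_val_two] at this
      linarith
    · have := h !![0,1,0;1,0,0;0,0,0] (by ext i j; fin_cases i <;> fin_cases j <;> rfl)
        (by norm_num [Matrix.trace, Matrix.diag, Fin.sum_univ_three, Matrix.vecHead, Matrix.vecTail, Matrix.cons_val_two]) ![1,0,0]
        (by norm_num [Fin.sum_univ_three, Matrix.vecHead, Matrix.vecTail, Matrix.cons_val_two])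
      norm_num [frob, vecMulVec_apply, Matrix.mulVec, dotProduct, Fin.sum_univ_three, Matrix.vecHead, Matrix.vecTail, Matrix.cons_val_two] at this
      linarith
    · have := h !![1,0,0;0,-(1/2),0;0,0,-(1/2)] (by ext i j; fin_cases i <;> fin_cases j <;> rfl)
        (by norm_num [Matrix.trace, Matrix.diag, Fin.sum_univ_three, Matrix.vecHead, Matrix.vecTail, Matrix.cons_val_two])
        ![1,0,0] (by norm_num [Fin.sum_univ_three, Matrix.vecHead, Matrix.vecTail, Matrix.cons_val_two])
      norm_num [frob, vecMulVec_apply, Matrix.mulVec, dotProduct, Fin.sum_univ_three, Matrix.vecHead, Matrix.vecTail, Matrix.cons_val_two] at this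
      linarith
  · rintro ⟨h2, h23, h1⟩ D hsym htr n hn
    have e10 : D 1 0 = D 0 1 := by
      simpa using congrFun (congrFun hsym 0) 1
    have e20 : D 2 0 = D 0 2 := by
      simpa using congrFun (congrFun hsym 0) 2
    have e21 : D 2 1 = D 1 2 := by
      simpa using congrFun (congrFun hsym 1) 2
    simp only [Matrix.trace, Matrix.diag, Fin.sum_univ_three] at htr
    rw [Fin.sum_univ_three] at hn
    simp only [frob, vecMulVec_apply, Matrix.mulVec, dotProduct, Fin.sum_univ_three] at *
    rw [e10, e20, e21]
    nlinarith [aux β1 β2 β3 (n 0) (n 1) (n 2) (D 0 0) (D 0 1) (D 0 2) (D 1 1) (D 1 2) (D 2 2)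
      hn htr h2 h23 h1]
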